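/- Closed form of the composed down-up transform: let α ≠ 2, β ≠ 2 and let f be a probability density function on (0, x_f) ⊆ (0, ∞), and suppose u(x) = ∫_x^{x_f} |(β−2)t|^{1/(β−2)} f(t) dt is finite; let g = 𝔘_β[f] be the one-parameter up transform determined by u and g(u(x)) = |(β−2)x|^{1/(2−β)}. Define S(x) = −((2−β)/(2−α)) |β−2|^{(β−α)/(2−β)} x^{(2−α)/(2−β)} and h(s) = |(2−α)s|^{(α−β)/(2−α)} f( |(2−α)s|^{(2−β)/(2−α)} / |2−β| ) for s in the range of S, extended by 0. Then: (i) S'(x) = −|(β−2)x|^{(β−α)/(2−β)} for all x ∈ (0, x_f); (ii) h(S(x)) · |S'(x)| = f(x) for all x ∈ (0, x_f), so that h is a probability density; and (iii) if f is differentiable, then h(S(x)) = g(u(x))^{α} / |g'(u(x))| for all x ∈ (0, x_f), i.e., h is the α-down transform of the β-up transform of f. -/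

import Mathlib

open MeasureTheory Set Filter Topology

noncomputable section

/-- The open interval with extended-real endpoints, viewed as a set of reals. -/
def intIoo (a b : EReal) : Set ℝ := {x : ℝ | a < (x : EReal) ∧ (x : EReal) < b}

lemma intIoo_isOpen (a b : EReal) : IsOpen (intIoo a b) := by
  have : intIoo a b = (fun x : ℝ => (x : EReal)) ⁻¹' (Set.Ioo a b) := rfl
  rw [this]; exact isOpen_Ioo.preimage continuous_coe_real_ereal

lemma intIoo_split (xf : EReal) (φ : ℝ → ℝ) (a b : ℝ) (hab : a ≤ b) (hb : (b : EReal) < xf)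
    (hint : IntegrableOn φ (intIoo (a : EReal) xf)) :
    ∫ t in intIoo (a:EReal) xf, φ t
      = (∫ t in Set.Ioc a b, φ t) + ∫ t in intIoo (b:EReal) xf, φ t := by
  have hsplit : intIoo (a:EReal) xf = Set.Ioc a b ∪ intIoo (b:EReal) xf := by
    ext t
    simp only [intIoo, Set.mem_setOf_eq, Set.mem_union, Set.mem_Ioc, EReal.coe_lt_coe_iff]
    constructor
    · rintro ⟨h1, h2⟩
      rcases le_or_gt t b with h | h
      · exact Or.inl ⟨h1, h⟩
      · exact Or.inr ⟨h, h2⟩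
    · rintro (⟨h1, h2⟩ | ⟨h1, h2⟩)
      · exact ⟨h1, lt_of_le_of_lt (EReal.coe_le_coe_iff.mpr h2) hb⟩
      · exact ⟨lt_of_le_of_lt hab h1, h2⟩
  have hdisj : Disjoint (Set.Ioc a b) (intIoo (b:EReal) xf) := by
    rw [Set.disjoint_left]
    rintro t ⟨_, h2⟩ ⟨h3, _⟩
    exact absurd (EReal.coe_lt_coe_iff.mp h3) (not_lt.mpr h2)
  rw [hsplit] at hint ⊢
  exact setIntegral_union hdisj (intIoo_isOpen _ _).measurableSet
    (hint.mono_set Set.subset_union_left) (hint.mono_set Set.subset_union_right)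

/-- closed form of the composed down-up transform
`𝔇_α𝔘_β[f] = 𝔊_{2-α,2-β}[f]`. -/
theorem down_up_transform_closed_form
    (α β : ℝ) (hα : α ≠ 2) (hβ : β ≠ 2)
    (xf : EReal) (hxf : (0 : EReal) < xf)
    (f g S h u : ℝ → ℝ)
    (hf_meas : Measurable f)
    (hf_nonneg : ∀ x, 0 ≤ f x)
    (hf_supp : ∀ x ∉ intIoo 0 xf, f x = 0)
    (hf_int : (∫ x, f x) = 1)
    (hu_fin : ∀ x ∈ intIoo 0 xf,
      IntegrableOn (fun t => |(β - 2) * t| ^ ((1 : ℝ) / (β - 2)) * f t)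
        (intIoo (x : EReal) xf))
    (hu : ∀ x ∈ intIoo 0 xf,
      u x = ∫ t in intIoo (x : EReal) xf, |(β - 2) * t| ^ ((1 : ℝ) / (β - 2)) * f t)
    (hg : ∀ x ∈ intIoo 0 xf, g (u x) = |(β - 2) * x| ^ ((1 : ℝ) / (2 - β)))
    (hS : ∀ x, S x = -((2 - β) / (2 - α)) * |β - 2| ^ ((β - α) / (2 - β))
      * x ^ ((2 - α) / (2 - β)))
    (hh : ∀ s ∈ S '' intIoo 0 xf,
      h s = |(2 - α) * s| ^ ((α - β) / (2 - α))
        * f (|(2 - α) * s| ^ ((2 - β) / (2 - α)) / |2 - β|))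
    (hh0 : ∀ s ∉ S '' intIoo 0 xf, h s = 0) :
    (∀ x ∈ intIoo 0 xf, HasDerivAt S (-(|(β - 2) * x| ^ ((β - α) / (2 - β)))) x)
    ∧ (∀ x ∈ intIoo 0 xf, h (S x) * |(β - 2) * x| ^ ((β - α) / (2 - β)) = f x)
    ∧ ((∀ s, 0 ≤ h s) ∧ (∫ s, h s) = 1)
    ∧ (∀ f' : ℝ → ℝ, (∀ x ∈ intIoo 0 xf, HasDerivAt f (f' x) x) →
        ∀ g' : ℝ → ℝ, (∀ x ∈ intIoo 0 xf, HasDerivAt g (g' (u x)) (u x)) →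
        ∀ x ∈ intIoo 0 xf, h (S x) = g (u x) ^ α / |g' (u x)|) := by
  have h2α : (2:ℝ) - α ≠ 0 := sub_ne_zero.mpr (Ne.symm hα)
  have h2β : (2:ℝ) - β ≠ 0 := sub_ne_zero.mpr (Ne.symm hβ)
  have hβ2 : β - 2 ≠ 0 := fun hc => h2β (by linarith)
  have hb : (0:ℝ) < |β - 2| := abs_pos.mpr hβ2
  set p : ℝ := (2 - α) / (2 - β) with hp
  set q : ℝ := (β - α) / (2 - β) with hq
  set I : Set ℝ := intIoo 0 xf with hI
  have hI_open : IsOpen I := intIoo_isOpen 0 xf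
  have hpos : ∀ x ∈ I, (0:ℝ) < x := fun x hx => by exact_mod_cast hx.1
  have hp1q : p = 1 + q := by rw [hp, hq]; field_simp; ring
  -- Part (i)
  have part1 : ∀ x ∈ I, HasDerivAt S (-(|(β - 2) * x| ^ q)) x := by
    intro x hx
    have hx0 := hpos x hx
    have hSfun : S = fun y => -((2 - β) / (2 - α)) * |β - 2| ^ q * y ^ p := funext hS
    have hd : HasDerivAt (fun y : ℝ => y ^ p) (p * x ^ (p - 1)) x :=
      Real.hasDerivAt_rpow_const (Or.inl hx0.ne')
    have hd2 := hd.const_mul (-((2 - β) / (2 - α)) * |β - 2| ^ q)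
    rw [← hSfun] at hd2
    refine hd2.congr_deriv ?_
    have hpq : p - 1 = q := by rw [hp1q]; ring
    rw [hpq, abs_mul, abs_of_pos hx0, Real.mul_rpow (abs_nonneg _) hx0.le]
    have e1 : -((2 - β) / (2 - α)) * |β - 2| ^ q * (p * x ^ q)
        = (-(((2 - β) / (2 - α)) * p)) * (|β - 2| ^ q * x ^ q) := by ring
    have e2 : ((2 - β) / (2 - α)) * p = 1 := by rw [hp]; field_simp
    rw [e1, e2]; ring
  -- Part (ii)
  have part2 : ∀ x ∈ I, h (S x) * |(β - 2) * x| ^ q = f x := by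
    intro x hx
    have hx0 := hpos x hx
    have hbx : (0:ℝ) < |β - 2| * x := mul_pos hb hx0
    rw [hh (S x) (Set.mem_image_of_mem S hx), hS x]
    have key : |(2 - α) * (-((2 - β) / (2 - α)) * |β - 2| ^ q * x ^ p)|
        = (|β - 2| * x) ^ p := by
      have h1 : (2 - α) * (-((2 - β) / (2 - α)) * |β - 2| ^ q * x ^ p)
          = -((2 - β) * (|β - 2| ^ q * x ^ p)) := by
        field_simp
      rw [h1, abs_neg, abs_mul,
        abs_of_pos (mul_pos (Real.rpow_pos_of_pos hb q) (Real.rpow_pos_of_pos hx0 p)),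
        abs_sub_comm 2 β, Real.mul_rpow hb.le hx0.le]
      have h2 : |β - 2| ^ p = |β - 2| * |β - 2| ^ q := by
        rw [hp1q, Real.rpow_add hb, Real.rpow_one]
      rw [h2]; ring
    rw [key, ← Real.rpow_mul hbx.le, ← Real.rpow_mul hbx.le]
    have e1 : p * ((2 - β) / (2 - α)) = 1 := by rw [hp]; field_simp
    have e2 : p * ((α - β) / (2 - α)) = -q := by rw [hp, hq]; field_simp; ring
    rw [e1, e2, Real.rpow_one, abs_sub_comm 2 β,
      mul_div_cancel_left₀ _ hb.ne']
    have e3 : |(β - 2) * x| = |β - 2| * x := by rw [abs_mul, abs_of_pos hx0]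
    rw [e3, Real.rpow_neg hbx.le]
    field_simp [(Real.rpow_pos_of_pos hbx q).ne']
  -- injectivity of S on I
  have hSinj : Set.InjOn S I := by
    intro x hx y hy hxy
    have hx0 := hpos x hx
    have hy0 := hpos y hy
    rw [hS x, hS y] at hxy
    have hC : -((2 - β) / (2 - α)) * |β - 2| ^ q ≠ 0 := by
      apply mul_ne_zero
      · simp only [neg_ne_zero]
        exact div_ne_zero h2β h2α
      · exact (Real.rpow_pos_of_pos hb q).ne'
    have hpow : x ^ p = y ^ p := mul_left_cancel₀ hC hxy
    have hpne : p ≠ 0 := div_ne_zero h2α h2β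
    have : (x ^ p) ^ (1/p) = (y ^ p) ^ (1/p) := by rw [hpow]
    rwa [← Real.rpow_mul hx0.le, ← Real.rpow_mul hy0.le, mul_one_div,
      div_self hpne, Real.rpow_one, Real.rpow_one] at this
  have hq_nonneg : ∀ x ∈ I, (0:ℝ) ≤ |(β - 2) * x| ^ q := fun x _ =>
    Real.rpow_nonneg (abs_nonneg _) q
  have hq_pos : ∀ x ∈ I, (0:ℝ) < |(β - 2) * x| ^ q := by
    intro x hx
    exact Real.rpow_pos_of_pos (abs_pos.mpr (mul_ne_zero hβ2 (hpos x hx).ne')) q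
  -- Part (iii)
  have part3 : (∀ s, 0 ≤ h s) ∧ (∫ s, h s) = 1 := by
    constructor
    · intro s
      by_cases hs : s ∈ S '' I
      · rw [hh s hs]
        exact mul_nonneg (Real.rpow_nonneg (abs_nonneg _) _) (hf_nonneg _)
      · rw [hh0 s hs]
    · have hScont : ContinuousOn S I := fun x hx =>
        ((part1 x hx).continuousAt).continuousWithinAt
      have hIm : MeasurableSet (S '' I) :=
        hI_open.measurableSet.image_of_continuousOn_injOn hScont hSinj
      rw [← setIntegral_eq_integral_of_forall_compl_eq_zero hh0,
        integral_image_eq_integral_abs_deriv_smul hI_open.measurableSet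
          (fun x hx => (part1 x hx).hasDerivWithinAt) hSinj h]
      have : ∫ x in I, |(-(|(β - 2) * x| ^ q))| • h (S x) = ∫ x in I, f x := by
        apply setIntegral_congr_fun hI_open.measurableSet
        intro x hx
        simp only [abs_neg, abs_of_nonneg (hq_nonneg x hx), smul_eq_mul]
        rw [mul_comm]
        exact part2 x hx
      rw [this, setIntegral_eq_integral_of_forall_compl_eq_zero hf_supp, hf_int]
  refine ⟨part1, part2, part3, ?_⟩
  -- Part (iv)
  intro f' hf' g' hg' x hx
  have hx0 := hpos x hx
  have hbx : (0:ℝ) < |β - 2| * x := mul_pos hb hx0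
  set r : ℝ := 1 / (2 - β) with hr
  have hrne : r ≠ 0 := one_div_ne_zero h2β
  set φ : ℝ → ℝ := fun t => |(β - 2) * t| ^ ((1 : ℝ) / (β - 2)) * f t with hφ
  -- derivative of u at x
  have hφ_meas : Measurable φ :=
    ((measurable_const.mul measurable_id).abs.pow measurable_const).mul hf_meas
  have hφ_cont : ContinuousAt φ x := by
    apply ContinuousAt.mul
    · apply ContinuousAt.rpow_const
      · exact ((continuous_const.mul continuous_id).abs).continuousAt
      · exact Or.inl (abs_ne_zero.mpr (mul_ne_zero hβ2 hx0.ne'))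
    · exact (hf' x hx).differentiableAt.continuousAt
  have huF : u =ᶠ[𝓝 x] fun y => u x - ∫ t in x..y, φ t := by
    filter_upwards [hI_open.mem_nhds hx] with y hy
    rcases le_total y x with hyx | hxy
    · have := intIoo_split xf φ y x hyx hx.2 (hu_fin y hy)
      rw [← hu y hy, ← hu x hx] at this
      rw [intervalIntegral.integral_symm, intervalIntegral.integral_of_le hyx]
      rw [this]; ring
    · have := intIoo_split xf φ x y hxy hy.2 (hu_fin x hx)
      rw [← hu x hx, ← hu y hy] at this
      rw [intervalIntegral.integral_of_le hxy]
      rw [this]; ring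
  have hu' : HasDerivAt u (-(φ x)) x := by
    have hbase : HasDerivAt (fun y => ∫ t in x..y, φ t) (φ x) x :=
      intervalIntegral.integral_hasDerivAt_right
        (IntervalIntegrable.refl)
        hφ_meas.stronglyMeasurable.stronglyMeasurableAtFilter hφ_cont
    have : HasDerivAt (fun y => u x - ∫ t in x..y, φ t) (-(φ x)) x := hbase.const_sub (u x)
    exact this.congr_of_eventuallyEq huF
  -- composed derivative
  have hcomp : HasDerivAt (fun y => g (u y)) (g' (u x) * (-(φ x))) x :=
    (hg' x hx).comp x hu'
  -- explicit form of g ∘ u near x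
  set D : ℝ := |β - 2| ^ r * (r * x ^ (r - 1)) with hD
  have hψ : HasDerivAt (fun y : ℝ => |β - 2| ^ r * y ^ r) D x :=
    (Real.hasDerivAt_rpow_const (Or.inl hx0.ne')).const_mul _
  have hgu_eq : (fun y => g (u y)) =ᶠ[𝓝 x] fun y => |β - 2| ^ r * y ^ r := by
    filter_upwards [hI_open.mem_nhds hx] with y hy
    rw [hg y hy, abs_mul, abs_of_pos (hpos y hy),
      Real.mul_rpow (abs_nonneg _) (hpos y hy).le]
  have hgu' : HasDerivAt (fun y => g (u y)) D x := hψ.congr_of_eventuallyEq hgu_eq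
  have heq : g' (u x) * (-(φ x)) = D := hcomp.unique hgu'
  have hDne : D ≠ 0 := by
    rw [hD]
    exact mul_ne_zero (Real.rpow_pos_of_pos hb r).ne'
      (mul_ne_zero hrne (Real.rpow_pos_of_pos hx0 _).ne')
  have hfx_pos : 0 < f x := by
    rcases lt_or_eq_of_le (hf_nonneg x) with hlt | heq0
    · exact hlt
    · exfalso
      apply hDne
      rw [← heq, hφ]
      simp [← heq0]
  have hφx_pos : 0 < φ x := by
    rw [hφ]
    exact mul_pos (Real.rpow_pos_of_pos (abs_pos.mpr (mul_ne_zero hβ2 hx0.ne')) _) hfx_pos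
  have habs : |g' (u x)| * φ x = |D| := by
    have := congrArg abs heq
    rwa [abs_mul, abs_neg, abs_of_pos hφx_pos] at this
  have hg'ne : |g' (u x)| ≠ 0 := by
    intro hc
    rw [hc, zero_mul] at habs
    exact hDne (abs_eq_zero.mp habs.symm)
  -- closed forms
  have he3 : |(β - 2) * x| = |β - 2| * x := by rw [abs_mul, abs_of_pos hx0]
  have hDabs : |D| = (|β - 2| * x) ^ (r - 1) := by
    rw [hD, abs_mul, abs_mul, abs_of_pos (Real.rpow_pos_of_pos hb r),
      abs_of_pos (Real.rpow_pos_of_pos hx0 (r - 1)),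
      Real.mul_rpow hb.le hx0.le]
    have : |r| = |β - 2|⁻¹ := by
      rw [hr, abs_div, abs_one, abs_sub_comm 2 β]
      simp [one_div]
    rw [this]
    have hbr : |β - 2| ^ r * |β - 2|⁻¹ = |β - 2| ^ (r - 1) := by
      rw [Real.rpow_sub hb, Real.rpow_one, div_eq_mul_inv]
    rw [← mul_assoc, hbr]
  have hφx_val : φ x = (|β - 2| * x) ^ (-r) * f x := by
    rw [hφ]
    simp only
    rw [he3]
    congr 1
    congr 1
    rw [hr]
    field_simp
    ring
  have hgux : g (u x) = (|β - 2| * x) ^ r := by rw [hg x hx, he3]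
  have hhSx : h (S x) = f x * (|β - 2| * x) ^ (-q) := by
    have := part2 x hx
    rw [he3] at this
    rw [Real.rpow_neg hbx.le]
    field_simp [(Real.rpow_pos_of_pos hbx q).ne'] at this ⊢
    linarith [this]
  have hg'val : |g' (u x)| = (|β - 2| * x) ^ (r - 1) / φ x :=
    (eq_div_iff hφx_pos.ne').mpr (by rw [habs, hDabs])
  rw [hhSx, hgux, hg'val, hφx_val, ← Real.rpow_mul hbx.le, div_div_eq_mul_div,
    eq_div_iff (Real.rpow_pos_of_pos hbx (r - 1)).ne']
  have hz : ∀ a b : ℝ, (|β - 2| * x) ^ a * (|β - 2| * x) ^ b = (|β - 2| * x) ^ (a + b) :=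
    fun a b => (Real.rpow_add hbx a b).symm
  have hexp : -q + (r - 1) = r * α + -r := by rw [hq, hr]; field_simp; ring
  rw [mul_assoc, hz, hexp, ← hz]
  ring
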